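/- arXiv:1407.3421 — 4 statements merged into one kernel-verified Lean document; each statement's English description precedes it below -/
import Mathlib

section
/- Let n be finite. Let A, B : ℝ → Matrix (Fin n) (Fin n) ℝ be continuous, Φ : ℝ × ℝ → Matrix (Fin n) (Fin n) ℝ the state transition matrix of dξ/dt = A(t)ξ (so ∂Φ(s,t)/∂s = A(s)Φ(s,t), Φ(t,t) = I, Φ(s,t)Φ(t,r) = Φ(s,r), Φ(s,t)⁻¹ = Φ(t,s)), and let P, P̂ be differentiable solutions of dP/dt = AP + PAᵀ + BBᵀ with P(0) = 0 and dP̂/dt = AP̂ + P̂Aᵀ − BBᵀ with P̂(1) = 0. Assume P̂(t) is invertible for t ∈ [0,1) and P(1) is invertible. Then Q(t) = P(t) − P(t)Φ(1,t)ᵀ P(1)⁻¹ Φ(1,t) P(t) satisfies, for all t ∈ [0,1), the differential Lyapunov equation dQ/dt = Â(t)Q(t) + Q(t)Â(t)ᵀ + B(t)B(t)ᵀ, where Â(t) = A(t) − B(t)B(t)ᵀ P̂(t)⁻¹, and Q(0) = 0. -/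
open Matrix

namespace Stmt12Aux

variable {n : ℕ}

attribute [local instance] Matrix.linftyOpNormedAddCommGroup Matrix.linftyOpNormedSpace
  Matrix.linftyOpNormedRing Matrix.linftyOpNormedAlgebra

private def entryLM (i j : Fin n) : Matrix (Fin n) (Fin n) ℝ →ₗ[ℝ] ℝ where
  toFun M := M i j
  map_add' _ _ := rfl
  map_smul' _ _ := rfl

lemma hasDerivAt_matrix {f : ℝ → Matrix (Fin n) (Fin n) ℝ} {f' : Matrix (Fin n) (Fin n) ℝ}
    {t : ℝ} :
    HasDerivAt f f' t ↔ ∀ i j, HasDerivAt (fun s => f s i j) (f' i j) t := by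
  constructor
  · intro h i j
    have h2 := (entryLM i j).toContinuousLinearMap.hasFDerivAt.comp_hasDerivAt t h
    exact h2
  · intro h
    have h2 : HasDerivAt (fun s => ∑ i, ∑ j, Matrix.single i j (f s i j))
        (∑ i, ∑ j, Matrix.single i j (f' i j)) t := by
      refine HasDerivAt.fun_sum fun i _ => HasDerivAt.fun_sum fun j _ => ?_
      have h3 := (h i j).smul_const (Matrix.single i j (1:ℝ))
      simpa [Matrix.smul_single] using h3
    have e1 : (fun s => ∑ i, ∑ j, Matrix.single i j (f s i j)) = f := by
      funext s; exact (Matrix.matrix_eq_sum_single (f s)).symm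
    rwa [e1, ← Matrix.matrix_eq_sum_single f'] at h2

lemma mtranspose {f : ℝ → Matrix (Fin n) (Fin n) ℝ} {f' : Matrix (Fin n) (Fin n) ℝ}
    {t : ℝ} (h : HasDerivAt f f' t) : HasDerivAt (fun s => (f s)ᵀ) f'ᵀ t :=
  hasDerivAt_matrix.2 fun i j => hasDerivAt_matrix.1 h j i

/-- Derivative of the (pointwise) inverse of a curve of invertible matrices. -/
lemma minv {F G : ℝ → Matrix (Fin n) (Fin n) ℝ} {F' : Matrix (Fin n) (Fin n) ℝ} {t : ℝ}
    (hFG : ∀ s, F s * G s = 1) (hGF : ∀ s, G s * F s = 1)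
    (h : HasDerivAt F F' t) : HasDerivAt G (-(G t * F' * G t)) t := by
  let U : ℝ → (Matrix (Fin n) (Fin n) ℝ)ˣ := fun s => ⟨F s, G s, hFG s, hGF s⟩
  have hinv : ∀ s, Ring.inverse (F s) = G s := fun s => Ring.inverse_unit (U s)
  have h1 := (hasFDerivAt_ringInverse (𝕜 := ℝ) (U t)).comp_hasDerivAt t h
  have e1 : (fun s => Ring.inverse (F s)) = G := funext hinv
  rw [show Ring.inverse ∘ F = G from e1] at h1
  have h2 : ((-(ContinuousLinearMap.mulLeftRight ℝ (Matrix (Fin n) (Fin n) ℝ)) ↑(U t)⁻¹) ↑(U t)⁻¹)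
        F' = -(G t * F' * G t) := by
    simp only [ContinuousLinearMap.neg_apply, ContinuousLinearMap.mulLeftRight_apply]
    rfl
  exact h2 ▸ h1

end Stmt12Aux

section

attribute [local instance] Matrix.linftyOpNormedAddCommGroup Matrix.linftyOpNormedSpace
  Matrix.linftyOpNormedRing Matrix.linftyOpNormedAlgebra

/-- Central identity of Proposition 1: the conditioned covariance
`Q(t) = P(t) − P(t)Φ(1,t)ᵀ P(1)⁻¹ Φ(1,t) P(t)` satisfies the closed-loop Lyapunov
equation `Q̇ = ÂQ + QÂᵀ + BBᵀ` with `Â = A − BBᵀP̂⁻¹`, and `Q(0) = 0`. -/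
theorem stmt_12 (n : ℕ) (A B : ℝ → Matrix (Fin n) (Fin n) ℝ)
    (Φ : ℝ → ℝ → Matrix (Fin n) (Fin n) ℝ)
    (P Phat : ℝ → Matrix (Fin n) (Fin n) ℝ)
    (hA : Continuous A) (hB : Continuous B)
    (hΦd : ∀ t : ℝ, ∀ s : ℝ, ∀ i j : Fin n,
      HasDerivAt (fun s => Φ s t i j) ((A s * Φ s t) i j) s)
    (hΦid : ∀ t : ℝ, Φ t t = 1)
    (hΦco : ∀ s t r : ℝ, Φ s t * Φ t r = Φ s r)
    (hΦinv : ∀ s t : ℝ, (Φ s t)⁻¹ = Φ t s)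
    (hP : ∀ t : ℝ, ∀ i j : Fin n,
      HasDerivAt (fun t => P t i j)
        ((A t * P t + P t * (A t)ᵀ + B t * (B t)ᵀ) i j) t)
    (hP0 : P 0 = 0)
    (hPhat : ∀ t : ℝ, ∀ i j : Fin n,
      HasDerivAt (fun t => Phat t i j)
        ((A t * Phat t + Phat t * (A t)ᵀ - B t * (B t)ᵀ) i j) t)
    (hPhat1 : Phat 1 = 0)
    (hPhatu : ∀ t ∈ Set.Ico (0 : ℝ) 1, IsUnit (Phat t))
    (hP1 : IsUnit (P 1)) :
    (∀ t ∈ Set.Ico (0 : ℝ) 1, ∀ i j : Fin n,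
      HasDerivAt
        (fun t => (P t - P t * (Φ 1 t)ᵀ * (P 1)⁻¹ * Φ 1 t * P t) i j)
        (((A t - B t * (B t)ᵀ * (Phat t)⁻¹)
            * (P t - P t * (Φ 1 t)ᵀ * (P 1)⁻¹ * Φ 1 t * P t)
          + (P t - P t * (Φ 1 t)ᵀ * (P 1)⁻¹ * Φ 1 t * P t)
            * (A t - B t * (B t)ᵀ * (Phat t)⁻¹)ᵀ
          + B t * (B t)ᵀ) i j) t) ∧
    P 0 - P 0 * (Φ 1 0)ᵀ * (P 1)⁻¹ * Φ 1 0 * P 0 = 0 := by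
  have hFG : ∀ s : ℝ, Φ s 1 * Φ 1 s = 1 := fun s => by rw [hΦco, hΦid]
  have hGF : ∀ s : ℝ, Φ 1 s * Φ s 1 = 1 := fun s => by rw [hΦco, hΦid]
  have hFd : ∀ t : ℝ, HasDerivAt (fun s => Φ s 1) (A t * Φ t 1) t :=
    fun t => Stmt12Aux.hasDerivAt_matrix.2 fun i j => hΦd 1 t i j
  have hGd : ∀ t : ℝ, HasDerivAt (fun s => Φ 1 s) (-(Φ 1 t * (A t * Φ t 1) * Φ 1 t)) t :=
    fun t => Stmt12Aux.minv hFG hGF (hFd t)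
  have hGd' : ∀ t : ℝ, HasDerivAt (fun s => Φ 1 s) (-(Φ 1 t * A t)) t := by
    intro t
    have e : -(Φ 1 t * (A t * Φ t 1) * Φ 1 t) = -(Φ 1 t * A t) := by
      rw [← mul_assoc, mul_assoc (Φ 1 t * A t) (Φ t 1) (Φ 1 t), hFG, mul_one]
    exact e ▸ hGd t
  have hPd : ∀ t, HasDerivAt P (A t * P t + P t * (A t)ᵀ + B t * (B t)ᵀ) t :=
    fun t => Stmt12Aux.hasDerivAt_matrix.2 (hP t)
  have hPhd : ∀ t, HasDerivAt Phat (A t * Phat t + Phat t * (A t)ᵀ - B t * (B t)ᵀ) t :=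
    fun t => Stmt12Aux.hasDerivAt_matrix.2 (hPhat t)
  -- a solution of the homogeneous Lyapunov equation vanishing somewhere vanishes everywhere
  have key : ∀ Z : ℝ → Matrix (Fin n) (Fin n) ℝ,
      (∀ t, HasDerivAt Z (A t * Z t + Z t * (A t)ᵀ) t) → ∀ t₀, Z t₀ = 0 → ∀ t, Z t = 0 := by
    intro Z hZ t₀ h0 t
    have hW : ∀ s, HasDerivAt (fun s => Φ 1 s * Z s * (Φ 1 s)ᵀ) 0 s := by
      intro s
      have h := ((hGd' s).mul (hZ s)).mul (Stmt12Aux.mtranspose (hGd' s))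
      have e : (-(Φ 1 s * A s) * Z s + Φ 1 s * (A s * Z s + Z s * (A s)ᵀ)) * (Φ 1 s)ᵀ
          + Φ 1 s * Z s * (-(Φ 1 s * A s))ᵀ = 0 := by
        simp only [Matrix.transpose_neg, Matrix.transpose_mul]
        noncomm_ring
      exact e ▸ h
    have hconst : ∀ a b : ℝ, Φ 1 a * Z a * (Φ 1 a)ᵀ = Φ 1 b * Z b * (Φ 1 b)ᵀ :=
      fun a b => is_const_of_deriv_eq_zero (fun x => (hW x).differentiableAt)
        (fun x => (hW x).deriv) a b
    have h1 : Φ 1 t * Z t * (Φ 1 t)ᵀ = 0 := by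
      rw [hconst t t₀, h0, mul_zero, zero_mul]
    have h2 : Z t = Φ t 1 * (Φ 1 t * Z t * (Φ 1 t)ᵀ) * (Φ t 1)ᵀ := by
      rw [show Φ t 1 * (Φ 1 t * Z t * (Φ 1 t)ᵀ) * (Φ t 1)ᵀ
          = (Φ t 1 * Φ 1 t) * Z t * ((Φ t 1) * (Φ 1 t))ᵀ by
        simp only [Matrix.transpose_mul]; noncomm_ring]
      rw [hFG, Matrix.transpose_one, one_mul, mul_one]
    rw [h2, h1, mul_zero, zero_mul]
  -- P is symmetric
  have hPsymm : ∀ t, (P t)ᵀ = P t := by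
    intro t
    have hDd : ∀ s, HasDerivAt (fun s => P s - (P s)ᵀ)
        (A s * (P s - (P s)ᵀ) + (P s - (P s)ᵀ) * (A s)ᵀ) s := by
      intro s
      have h := (hPd s).sub (Stmt12Aux.mtranspose (hPd s))
      have e : (A s * P s + P s * (A s)ᵀ + B s * (B s)ᵀ)
          - (A s * P s + P s * (A s)ᵀ + B s * (B s)ᵀ)ᵀ
          = A s * (P s - (P s)ᵀ) + (P s - (P s)ᵀ) * (A s)ᵀ := by
        simp only [Matrix.transpose_add, Matrix.transpose_mul, Matrix.transpose_transpose]
        noncomm_ring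
      exact e ▸ h
    have h := key _ hDd 0 (by rw [hP0]; simp) t
    have := sub_eq_zero.mp h
    exact this.symm
  -- Phat + P = Φ t 1 * P 1 * (Φ t 1)ᵀ
  have hkeyPh : ∀ t, Phat t + P t = Φ t 1 * P 1 * (Φ t 1)ᵀ := by
    intro t
    have hZd : ∀ s, HasDerivAt (fun s => Phat s + P s - Φ s 1 * P 1 * (Φ s 1)ᵀ)
        (A s * (Phat s + P s - Φ s 1 * P 1 * (Φ s 1)ᵀ)
          + (Phat s + P s - Φ s 1 * P 1 * (Φ s 1)ᵀ) * (A s)ᵀ) s := by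
      intro s
      have h := ((hPhd s).add (hPd s)).sub
        ((((hFd s).mul_const (P 1)).mul (Stmt12Aux.mtranspose (hFd s))))
      have e : (A s * Phat s + Phat s * (A s)ᵀ - B s * (B s)ᵀ)
            + (A s * P s + P s * (A s)ᵀ + B s * (B s)ᵀ)
          - ((A s * Φ s 1 * P 1) * (Φ s 1)ᵀ + (Φ s 1 * P 1) * (A s * Φ s 1)ᵀ)
          = A s * (Phat s + P s - Φ s 1 * P 1 * (Φ s 1)ᵀ)
            + (Phat s + P s - Φ s 1 * P 1 * (Φ s 1)ᵀ) * (A s)ᵀ := by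
        simp only [Matrix.transpose_mul]
        noncomm_ring
      exact e ▸ h
    have h := key _ hZd 1 (by rw [hPhat1, hΦid, zero_add]; simp) t
    exact sub_eq_zero.mp h
  -- Phat is symmetric
  have hPhsymm : ∀ t, (Phat t)ᵀ = Phat t := by
    intro t
    have e : Phat t = Φ t 1 * P 1 * (Φ t 1)ᵀ - P t := by
      rw [← hkeyPh t]; abel
    rw [e]
    simp only [Matrix.transpose_sub, Matrix.transpose_mul, Matrix.transpose_transpose,
      hPsymm 1, hPsymm t, mul_assoc]
  refine ⟨?_, by rw [hP0]; simp⟩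
  intro t ht i j
  have hP1det : IsUnit (P 1).det := (Matrix.isUnit_iff_isUnit_det _).1 hP1
  have hP1i : P 1 * (P 1)⁻¹ = 1 := Matrix.mul_nonsing_inv _ hP1det
  have hP1i' : (P 1)⁻¹ * P 1 = 1 := Matrix.nonsing_inv_mul _ hP1det
  have hPhdet : IsUnit (Phat t).det := (Matrix.isUnit_iff_isUnit_det _).1 (hPhatu t ht)
  have hPhi : Phat t * (Phat t)⁻¹ = 1 := Matrix.mul_nonsing_inv _ hPhdet
  have hPhi' : (Phat t)⁻¹ * Phat t = 1 := Matrix.nonsing_inv_mul _ hPhdet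
  have eSum : P t + Phat t = Φ t 1 * P 1 * (Φ t 1)ᵀ := by rw [add_comm]; exact hkeyPh t
  -- (P + Phat) * Π = 1
  have ePi1 : (P t + Phat t) * ((Φ 1 t)ᵀ * (P 1)⁻¹ * Φ 1 t) = 1 := by
    rw [eSum]
    calc Φ t 1 * P 1 * (Φ t 1)ᵀ * ((Φ 1 t)ᵀ * (P 1)⁻¹ * Φ 1 t)
        = Φ t 1 * P 1 * (Φ 1 t * Φ t 1)ᵀ * ((P 1)⁻¹ * Φ 1 t) := by
          simp only [Matrix.transpose_mul]; noncomm_ring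
      _ = Φ t 1 * (P 1 * (P 1)⁻¹) * Φ 1 t := by
          rw [hGF, Matrix.transpose_one, mul_one]; noncomm_ring
      _ = 1 := by rw [hP1i, mul_one, hFG]
  -- Π * (P + Phat) = 1
  have ePi2 : ((Φ 1 t)ᵀ * (P 1)⁻¹ * Φ 1 t) * (P t + Phat t) = 1 := by
    rw [eSum]
    calc (Φ 1 t)ᵀ * (P 1)⁻¹ * Φ 1 t * (Φ t 1 * P 1 * (Φ t 1)ᵀ)
        = (Φ 1 t)ᵀ * ((P 1)⁻¹ * ((Φ 1 t * Φ t 1) * P 1)) * (Φ t 1)ᵀ := by noncomm_ring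
      _ = (Φ 1 t)ᵀ * ((P 1)⁻¹ * P 1) * (Φ t 1)ᵀ := by rw [hGF, one_mul]
      _ = (Φ t 1 * Φ 1 t)ᵀ := by rw [hP1i', mul_one, Matrix.transpose_mul]
      _ = 1 := by rw [hFG, Matrix.transpose_one]
  -- the two key cancellation identities
  have e1 : (Phat t)⁻¹ * (P t - P t * (Φ 1 t)ᵀ * (P 1)⁻¹ * Φ 1 t * P t)
      = ((Φ 1 t)ᵀ * (P 1)⁻¹ * Φ 1 t) * P t := by
    have h3 : Phat t * (((Φ 1 t)ᵀ * (P 1)⁻¹ * Φ 1 t) * P t)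
        = P t - P t * (Φ 1 t)ᵀ * (P 1)⁻¹ * Φ 1 t * P t := by
      have h4 : P t * ((Φ 1 t)ᵀ * (P 1)⁻¹ * Φ 1 t)
          + Phat t * ((Φ 1 t)ᵀ * (P 1)⁻¹ * Φ 1 t) = 1 := by
        rw [← add_mul]; exact ePi1
      have h5 : Phat t * ((Φ 1 t)ᵀ * (P 1)⁻¹ * Φ 1 t)
          = 1 - P t * ((Φ 1 t)ᵀ * (P 1)⁻¹ * Φ 1 t) := by
        rw [← h4]; abel
      calc Phat t * (((Φ 1 t)ᵀ * (P 1)⁻¹ * Φ 1 t) * P t)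
          = (Phat t * ((Φ 1 t)ᵀ * (P 1)⁻¹ * Φ 1 t)) * P t := by noncomm_ring
        _ = (1 - P t * ((Φ 1 t)ᵀ * (P 1)⁻¹ * Φ 1 t)) * P t := by rw [h5]
        _ = P t - P t * (Φ 1 t)ᵀ * (P 1)⁻¹ * Φ 1 t * P t := by noncomm_ring
    rw [← h3, ← mul_assoc, hPhi', one_mul]
  have e2 : (P t - P t * (Φ 1 t)ᵀ * (P 1)⁻¹ * Φ 1 t * P t) * (Phat t)⁻¹
      = P t * ((Φ 1 t)ᵀ * (P 1)⁻¹ * Φ 1 t) := by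
    have h3 : (P t * ((Φ 1 t)ᵀ * (P 1)⁻¹ * Φ 1 t)) * Phat t
        = P t - P t * (Φ 1 t)ᵀ * (P 1)⁻¹ * Φ 1 t * P t := by
      have h4 : ((Φ 1 t)ᵀ * (P 1)⁻¹ * Φ 1 t) * P t
          + ((Φ 1 t)ᵀ * (P 1)⁻¹ * Φ 1 t) * Phat t = 1 := by
        rw [← mul_add]; exact ePi2
      have h5 : ((Φ 1 t)ᵀ * (P 1)⁻¹ * Φ 1 t) * Phat t
          = 1 - ((Φ 1 t)ᵀ * (P 1)⁻¹ * Φ 1 t) * P t := by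
        rw [← h4]; abel
      calc (P t * ((Φ 1 t)ᵀ * (P 1)⁻¹ * Φ 1 t)) * Phat t
          = P t * (((Φ 1 t)ᵀ * (P 1)⁻¹ * Φ 1 t) * Phat t) := by noncomm_ring
        _ = P t * (1 - ((Φ 1 t)ᵀ * (P 1)⁻¹ * Φ 1 t) * P t) := by rw [h5]
        _ = P t - P t * (Φ 1 t)ᵀ * (P 1)⁻¹ * Φ 1 t * P t := by noncomm_ring
    rw [← h3, mul_assoc, hPhi, mul_one]
  -- transpose of the closed-loop matrix
  have hAhatT : (A t - B t * (B t)ᵀ * (Phat t)⁻¹)ᵀ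
      = (A t)ᵀ - (Phat t)⁻¹ * (B t * (B t)ᵀ) := by
    rw [Matrix.transpose_sub, Matrix.transpose_mul, Matrix.transpose_nonsing_inv,
      hPhsymm t, Matrix.transpose_mul, Matrix.transpose_transpose]
  -- derivative of Q
  have hPid : HasDerivAt (fun s => (Φ 1 s)ᵀ * (P 1)⁻¹ * Φ 1 s)
      ((-(Φ 1 t * A t))ᵀ * (P 1)⁻¹ * Φ 1 t
        + (Φ 1 t)ᵀ * (P 1)⁻¹ * (-(Φ 1 t * A t))) t :=
    ((Stmt12Aux.mtranspose (hGd' t)).mul_const ((P 1)⁻¹)).mul (hGd' t)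
  have hQd : HasDerivAt (fun s => P s - P s * ((Φ 1 s)ᵀ * (P 1)⁻¹ * Φ 1 s) * P s)
      ((A t * P t + P t * (A t)ᵀ + B t * (B t)ᵀ)
        - (((A t * P t + P t * (A t)ᵀ + B t * (B t)ᵀ) * ((Φ 1 t)ᵀ * (P 1)⁻¹ * Φ 1 t)
            + P t * ((-(Φ 1 t * A t))ᵀ * (P 1)⁻¹ * Φ 1 t
              + (Φ 1 t)ᵀ * (P 1)⁻¹ * (-(Φ 1 t * A t)))) * P t
          + P t * ((Φ 1 t)ᵀ * (P 1)⁻¹ * Φ 1 t)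
            * (A t * P t + P t * (A t)ᵀ + B t * (B t)ᵀ))) t :=
    (hPd t).sub (((hPd t).mul hPid).mul (hPd t))
  have efun : (fun s => P s - P s * ((Φ 1 s)ᵀ * (P 1)⁻¹ * Φ 1 s) * P s)
      = (fun s => P s - P s * (Φ 1 s)ᵀ * (P 1)⁻¹ * Φ 1 s * P s) := by
    funext s; noncomm_ring
  rw [efun] at hQd
  -- identify the derivative value
  have hval : (A t - B t * (B t)ᵀ * (Phat t)⁻¹)
        * (P t - P t * (Φ 1 t)ᵀ * (P 1)⁻¹ * Φ 1 t * P t)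
      + (P t - P t * (Φ 1 t)ᵀ * (P 1)⁻¹ * Φ 1 t * P t)
        * (A t - B t * (B t)ᵀ * (Phat t)⁻¹)ᵀ
      + B t * (B t)ᵀ
      = (A t * P t + P t * (A t)ᵀ + B t * (B t)ᵀ)
        - (((A t * P t + P t * (A t)ᵀ + B t * (B t)ᵀ) * ((Φ 1 t)ᵀ * (P 1)⁻¹ * Φ 1 t)
            + P t * ((-(Φ 1 t * A t))ᵀ * (P 1)⁻¹ * Φ 1 t
              + (Φ 1 t)ᵀ * (P 1)⁻¹ * (-(Φ 1 t * A t)))) * P t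
          + P t * ((Φ 1 t)ᵀ * (P 1)⁻¹ * Φ 1 t)
            * (A t * P t + P t * (A t)ᵀ + B t * (B t)ᵀ)) := by
    rw [hAhatT]
    calc (A t - B t * (B t)ᵀ * (Phat t)⁻¹)
          * (P t - P t * (Φ 1 t)ᵀ * (P 1)⁻¹ * Φ 1 t * P t)
        + (P t - P t * (Φ 1 t)ᵀ * (P 1)⁻¹ * Φ 1 t * P t)
          * ((A t)ᵀ - (Phat t)⁻¹ * (B t * (B t)ᵀ))
        + B t * (B t)ᵀ
        = A t * (P t - P t * (Φ 1 t)ᵀ * (P 1)⁻¹ * Φ 1 t * P t)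
          + (P t - P t * (Φ 1 t)ᵀ * (P 1)⁻¹ * Φ 1 t * P t) * (A t)ᵀ
          + B t * (B t)ᵀ
          - (B t * (B t)ᵀ)
            * ((Phat t)⁻¹ * (P t - P t * (Φ 1 t)ᵀ * (P 1)⁻¹ * Φ 1 t * P t))
          - ((P t - P t * (Φ 1 t)ᵀ * (P 1)⁻¹ * Φ 1 t * P t) * (Phat t)⁻¹)
            * (B t * (B t)ᵀ) := by noncomm_ring
      _ = A t * (P t - P t * (Φ 1 t)ᵀ * (P 1)⁻¹ * Φ 1 t * P t)
          + (P t - P t * (Φ 1 t)ᵀ * (P 1)⁻¹ * Φ 1 t * P t) * (A t)ᵀ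
          + B t * (B t)ᵀ
          - (B t * (B t)ᵀ) * (((Φ 1 t)ᵀ * (P 1)⁻¹ * Φ 1 t) * P t)
          - (P t * ((Φ 1 t)ᵀ * (P 1)⁻¹ * Φ 1 t)) * (B t * (B t)ᵀ) := by rw [e1, e2]
      _ = _ := by
          simp only [Matrix.transpose_neg, Matrix.transpose_mul]
          noncomm_ring
  rw [← hval] at hQd
  exact Stmt12Aux.hasDerivAt_matrix.1 hQd i j

end
end

section
/- Let n be finite and let Φ : ℝ × ℝ → Matrix (Fin n) (Fin n) ℝ satisfy Φ(t,t) = I, Φ(s,t)Φ(t,r) = Φ(s,r), and Φ(s,t)⁻¹ = Φ(t,s). Suppose T : ℝ → Matrix (Fin n) (Fin n) ℝ satisfies T(s) = Φ(s,0) T(0) Φ(s,0)ᵀ for all s, and T(1) is invertible. Then for all t, s: K(t,s) := Φ(1,t)ᵀ T(1)⁻¹ Φ(1,s) T(s) = Φ(s,t)ᵀ. -/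
open Matrix

/-- If `Φ(s,t)` has the transition-matrix properties and
`T(s) = Φ(s,0) T(0) Φ(s,0)ᵀ` with `T(1)` invertible, then for all `t, s`,
`K(t,s) = Φ(1,t)ᵀ T(1)⁻¹ Φ(1,s) T(s) = Φ(s,t)ᵀ`. -/
theorem stmt_13 (n : ℕ) (Φ : ℝ → ℝ → Matrix (Fin n) (Fin n) ℝ)
    (T : ℝ → Matrix (Fin n) (Fin n) ℝ)
    (hΦid : ∀ t : ℝ, Φ t t = 1)
    (hΦco : ∀ s t r : ℝ, Φ s t * Φ t r = Φ s r)
    (hΦinv : ∀ s t : ℝ, (Φ s t)⁻¹ = Φ t s)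
    (hT : ∀ s : ℝ, T s = Φ s 0 * T 0 * (Φ s 0)ᵀ)
    (hT1 : IsUnit (T 1)) :
    ∀ t s : ℝ, (Φ 1 t)ᵀ * (T 1)⁻¹ * Φ 1 s * T s = (Φ s t)ᵀ := by
  intro t s
  have hdet : IsUnit (T 1).det := (Matrix.isUnit_iff_isUnit_det _).mp hT1
  have h1 : Φ 1 s * T s = T 1 * ((Φ 0 1)ᵀ * (Φ s 0)ᵀ) := by
    rw [hT s, hT 1]
    calc Φ 1 s * (Φ s 0 * T 0 * (Φ s 0)ᵀ)
        = (Φ 1 s * Φ s 0) * T 0 * (Φ s 0)ᵀ := by noncomm_ring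
      _ = Φ 1 0 * T 0 * (Φ s 0)ᵀ := by rw [hΦco]
      _ = Φ 1 0 * T 0 * ((Φ 0 1 * Φ 1 0)ᵀ) * (Φ s 0)ᵀ := by
            rw [hΦco, hΦid]; simp
      _ = Φ 1 0 * T 0 * (Φ 1 0)ᵀ * ((Φ 0 1)ᵀ * (Φ s 0)ᵀ) := by
            rw [Matrix.transpose_mul]; simp only [mul_assoc]
  calc (Φ 1 t)ᵀ * (T 1)⁻¹ * Φ 1 s * T s
      = (Φ 1 t)ᵀ * ((T 1)⁻¹ * (Φ 1 s * T s)) := by noncomm_ring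
    _ = (Φ 1 t)ᵀ * ((T 1)⁻¹ * (T 1 * ((Φ 0 1)ᵀ * (Φ s 0)ᵀ))) := by rw [h1]
    _ = (Φ 1 t)ᵀ * ((Φ 0 1)ᵀ * (Φ s 0)ᵀ) := by
          rw [← mul_assoc (T 1)⁻¹, Matrix.nonsing_inv_mul _ hdet, one_mul]
    _ = (Φ s 0 * Φ 0 1 * Φ 1 t)ᵀ := by simp [Matrix.transpose_mul, mul_assoc]
    _ = (Φ s t)ᵀ := by rw [hΦco, hΦco]
end

section
/- Let n be finite. Let A, B : ℝ → Matrix (Fin n) (Fin n) ℝ be continuous, Φ the state transition matrix of dξ/dt = A(t)ξ (with ∂Φ(s,t)/∂s = A(s)Φ(s,t), Φ(t,t) = I, Φ(s,t)Φ(t,r) = Φ(s,r), Φ(s,t)⁻¹ = Φ(t,s)), and let P, P̂ be differentiable solutions of dP/dt = AP + PAᵀ + BBᵀ with P(0) = 0 and dP̂/dt = AP̂ + P̂Aᵀ − BBᵀ with P̂(1) = 0. Assume P̂(s) is invertible for s ∈ [0,1) and P(1) is invertible. Fix t ∈ [0,1] and define, for s ∈ [t,1), Q(t,s) = P(t)Φ(s,t)ᵀ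 − P(t)Φ(1,t)ᵀ P(1)⁻¹ Φ(1,s) P(s). Then ∂Q(t,s)/∂s = Q(t,s) Â(s)ᵀ for all s ∈ [t,1), where Â(s) = A(s) − B(s)B(s)ᵀ P̂(s)⁻¹. -/
open Matrix

attribute [local instance] Matrix.linftyOpNormedRing Matrix.linftyOpNormedAlgebra

namespace Stmt14Aux

variable {n : ℕ}

/-- Evaluation of a matrix entry as a continuous linear map. -/
noncomputable def entryCLM (i j : Fin n) : Matrix (Fin n) (Fin n) ℝ →L[ℝ] ℝ :=
  LinearMap.toContinuousLinearMap
    { toFun := fun M => M i j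
      map_add' := fun _ _ => rfl
      map_smul' := fun _ _ => rfl }

theorem entry_hasDerivAt {f : ℝ → Matrix (Fin n) (Fin n) ℝ}
    {f' : Matrix (Fin n) (Fin n) ℝ} {s : ℝ} (h : HasDerivAt f f' s) (i j : Fin n) :
    HasDerivAt (fun u => f u i j) (f' i j) s :=
  (entryCLM i j).hasFDerivAt.comp_hasDerivAt s h

theorem hasDerivAt_of_entries {f : ℝ → Matrix (Fin n) (Fin n) ℝ}
    {f' : Matrix (Fin n) (Fin n) ℝ} {s : ℝ}
    (h : ∀ i j, HasDerivAt (fun u => f u i j) (f' i j) s) :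
    HasDerivAt f f' s := by
  have key : HasDerivAt
      (fun u => ∑ i : Fin n, ∑ j : Fin n, f u i j • single i j (1 : ℝ))
      (∑ i : Fin n, ∑ j : Fin n, f' i j • single i j (1 : ℝ)) s :=
    HasDerivAt.fun_sum fun i _ => HasDerivAt.fun_sum fun j _ => (h i j).smul_const _
  have e : ∀ (M : Matrix (Fin n) (Fin n) ℝ),
      M = ∑ i : Fin n, ∑ j : Fin n, M i j • single i j (1 : ℝ) := by
    intro M
    conv_lhs => rw [matrix_eq_sum_single M]
    refine Finset.sum_congr rfl fun i _ => Finset.sum_congr rfl fun j _ => ?_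
    rw [smul_single, smul_eq_mul, mul_one]
  have ef : (fun u => f u) = fun u => ∑ i : Fin n, ∑ j : Fin n,
      f u i j • single i j (1 : ℝ) := funext fun u => e (f u)
  rw [show f = fun u => f u from rfl, ef, e f']
  exact key

theorem HasDerivAt.matrixTranspose {f : ℝ → Matrix (Fin n) (Fin n) ℝ}
    {f' : Matrix (Fin n) (Fin n) ℝ} {s : ℝ} (h : HasDerivAt f f' s) :
    HasDerivAt (fun u => (f u)ᵀ) f'ᵀ s :=
  hasDerivAt_of_entries fun i j => by
    simpa [Matrix.transpose_apply] using entry_hasDerivAt h j i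

end Stmt14Aux

open Stmt14Aux

/-- Cross-covariance identity of Proposition 1: for fixed `t ∈ [0,1]`, the bridge
cross-covariance `Q(t,s) = P(t)Φ(s,t)ᵀ − P(t)Φ(1,t)ᵀ P(1)⁻¹ Φ(1,s) P(s)` satisfies
`∂Q(t,s)/∂s = Q(t,s) Â(s)ᵀ` for `s ∈ [t,1)`, where `Â = A − BBᵀP̂⁻¹`. -/
theorem stmt_14 (n : ℕ) (A B : ℝ → Matrix (Fin n) (Fin n) ℝ)
    (Φ : ℝ → ℝ → Matrix (Fin n) (Fin n) ℝ)
    (P Phat : ℝ → Matrix (Fin n) (Fin n) ℝ)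
    (hA : Continuous A) (hB : Continuous B)
    (hΦd : ∀ t : ℝ, ∀ s : ℝ, ∀ i j : Fin n,
      HasDerivAt (fun s => Φ s t i j) ((A s * Φ s t) i j) s)
    (hΦid : ∀ t : ℝ, Φ t t = 1)
    (hΦco : ∀ s t r : ℝ, Φ s t * Φ t r = Φ s r)
    (hΦinv : ∀ s t : ℝ, (Φ s t)⁻¹ = Φ t s)
    (hP : ∀ t : ℝ, ∀ i j : Fin n,
      HasDerivAt (fun t => P t i j)
        ((A t * P t + P t * (A t)ᵀ + B t * (B t)ᵀ) i j) t)
    (hP0 : P 0 = 0)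
    (hPhat : ∀ t : ℝ, ∀ i j : Fin n,
      HasDerivAt (fun t => Phat t i j)
        ((A t * Phat t + Phat t * (A t)ᵀ - B t * (B t)ᵀ) i j) t)
    (hPhat1 : Phat 1 = 0)
    (hPhatu : ∀ s ∈ Set.Ico (0 : ℝ) 1, IsUnit (Phat s))
    (hP1 : IsUnit (P 1))
    (t : ℝ) (ht : t ∈ Set.Icc (0 : ℝ) 1) :
    ∀ s ∈ Set.Ico t 1, ∀ i j : Fin n,
      HasDerivAt
        (fun s => (P t * (Φ s t)ᵀ - P t * (Φ 1 t)ᵀ * (P 1)⁻¹ * Φ 1 s * P s) i j)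
        (((P t * (Φ s t)ᵀ - P t * (Φ 1 t)ᵀ * (P 1)⁻¹ * Φ 1 s * P s)
            * (A s - B s * (B s)ᵀ * (Phat s)⁻¹)ᵀ) i j) s := by
  -- matrix-level derivatives
  have hΦdM : ∀ c u : ℝ, HasDerivAt (fun x => Φ x c) (A u * Φ u c) u := fun c u =>
    hasDerivAt_of_entries fun i j => hΦd c u i j
  have hPM : ∀ u : ℝ,
      HasDerivAt P (A u * P u + P u * (A u)ᵀ + B u * (B u)ᵀ) u := fun u =>
    hasDerivAt_of_entries fun i j => hP u i j
  have hPhatM : ∀ u : ℝ,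
      HasDerivAt Phat (A u * Phat u + Phat u * (A u)ᵀ - B u * (B u)ᵀ) u := fun u =>
    hasDerivAt_of_entries fun i j => hPhat u i j
  -- Φ is everywhere invertible
  have hΦmul1 : ∀ a b : ℝ, Φ a b * Φ b a = 1 := fun a b => by rw [hΦco, hΦid]
  have hΦu : ∀ a b : ℝ, IsUnit (Φ a b) := fun a b =>
    ⟨⟨Φ a b, Φ b a, hΦmul1 a b, hΦmul1 b a⟩, rfl⟩
  -- derivative in the second argument
  have hΦd2 : ∀ c u : ℝ, HasDerivAt (fun x => Φ c x) (-(Φ c u * A u)) u := by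
    intro c u
    obtain ⟨v, hv⟩ := hΦu u c
    have hinv : HasFDerivAt (Ring.inverse (M₀ := Matrix (Fin n) (Fin n) ℝ))
        (-(ContinuousLinearMap.mulLeftRight ℝ _ (↑v⁻¹) (↑v⁻¹))) (Φ u c) := by
      rw [← hv]; exact hasFDerivAt_ringInverse v
    have hcomp := hinv.comp_hasDerivAt u (hΦdM c u)
    have hv' : (↑v⁻¹ : Matrix (Fin n) (Fin n) ℝ) = Φ c u := by
      rw [Matrix.coe_units_inv, hv, hΦinv]
    have e1 : (fun x => Ring.inverse (Φ x c)) = fun x => Φ c x := by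
      funext x
      rw [← Matrix.nonsing_inv_eq_ringInverse, hΦinv]
    simp only [Function.comp_def] at hcomp
    rw [e1] at hcomp
    refine hcomp.congr_deriv ?_
    rw [ContinuousLinearMap.neg_apply, ContinuousLinearMap.mulLeftRight_apply, hv']
    rw [show Φ c u * (A u * Φ u c) * Φ c u = Φ c u * A u * (Φ u c * Φ c u) by
      simp [mul_assoc], hΦmul1, mul_one]
  -- the conserved quantity
  have hconst : ∀ u v : ℝ,
      Φ 0 u * (P u + (Phat u)ᵀ) * (Φ 0 u)ᵀ = Φ 0 v * (P v + (Phat v)ᵀ) * (Φ 0 v)ᵀ := by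
    have hg : ∀ u : ℝ, HasDerivAt
        (fun x => Φ 0 x * (P x + (Phat x)ᵀ) * (Φ 0 x)ᵀ) 0 u := by
      intro u
      have h1 : HasDerivAt (fun x => P x + (Phat x)ᵀ)
          ((A u * P u + P u * (A u)ᵀ + B u * (B u)ᵀ)
            + (A u * Phat u + Phat u * (A u)ᵀ - B u * (B u)ᵀ)ᵀ) u :=
        (hPM u).add (HasDerivAt.matrixTranspose (hPhatM u))
      have h2 := ((hΦd2 0 u).mul h1).mul (HasDerivAt.matrixTranspose (hΦd2 0 u))
      refine h2.congr_deriv ?_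
      simp only [Matrix.transpose_add, Matrix.transpose_sub, Matrix.transpose_mul,
        Matrix.transpose_neg, Matrix.transpose_transpose, Pi.mul_apply]
      noncomm_ring
    intro u v
    ext i j
    exact is_const_of_deriv_eq_zero
      (f := fun x => (Φ 0 x * (P x + (Phat x)ᵀ) * (Φ 0 x)ᵀ) i j)
      (fun x => (entry_hasDerivAt (hg x) i j).differentiableAt)
      (fun x => by
        have := (entry_hasDerivAt (hg x) i j).deriv
        simpa using this) u v
  -- key identity : P u + (Phat u)ᵀ = Φ u 1 * P 1 * (Φ u 1)ᵀ
  have key : ∀ u : ℝ, P u + (Phat u)ᵀ = Φ u 1 * P 1 * (Φ u 1)ᵀ := by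
    intro u
    have h := hconst u 1
    calc P u + (Phat u)ᵀ
        = (Φ u 0 * Φ 0 u) * (P u + (Phat u)ᵀ) * (Φ u 0 * Φ 0 u)ᵀ := by
          rw [hΦmul1]; simp
      _ = Φ u 0 * (Φ 0 u * (P u + (Phat u)ᵀ) * (Φ 0 u)ᵀ) * (Φ u 0)ᵀ := by
          simp only [Matrix.transpose_mul, mul_assoc]
      _ = Φ u 0 * (Φ 0 1 * (P 1 + (Phat 1)ᵀ) * (Φ 0 1)ᵀ) * (Φ u 0)ᵀ := by rw [h]
      _ = (Φ u 0 * Φ 0 1) * P 1 * (Φ u 0 * Φ 0 1)ᵀ := by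
          rw [hPhat1]
          simp only [Matrix.transpose_zero, add_zero, Matrix.transpose_mul, mul_assoc]
      _ = Φ u 1 * P 1 * (Φ u 1)ᵀ := by rw [hΦco]
  -- main part
  intro s hs i j
  set C : Matrix (Fin n) (Fin n) ℝ := P t * (Φ 1 t)ᵀ * (P 1)⁻¹ with hC
  have hs0 : (0 : ℝ) ≤ s := le_trans ht.1 hs.1
  have hPhs : IsUnit (Phat s) := hPhatu s ⟨hs0, hs.2⟩
  -- derivative of Q at the matrix level
  have hQ1 : HasDerivAt (fun x => P t * (Φ x t)ᵀ) (P t * (A s * Φ s t)ᵀ) s :=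
    (HasDerivAt.matrixTranspose (hΦdM t s)).const_mul (P t)
  have hQ2 : HasDerivAt (fun x => C * Φ 1 x * P x)
      ((C * -(Φ 1 s * A s)) * P s
        + C * Φ 1 s * (A s * P s + P s * (A s)ᵀ + B s * (B s)ᵀ)) s :=
    ((hΦd2 1 s).const_mul C).mul (hPM s)
  have hQ : HasDerivAt (fun x => P t * (Φ x t)ᵀ - C * Φ 1 x * P x)
      (P t * (A s * Φ s t)ᵀ - ((C * -(Φ 1 s * A s)) * P s
        + C * Φ 1 s * (A s * P s + P s * (A s)ᵀ + B s * (B s)ᵀ))) s := hQ1.sub hQ2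
  -- Q = C * Φ 1 s * (Phat s)ᵀ
  have hPs : P s = Φ s 1 * P 1 * (Φ s 1)ᵀ - (Phat s)ᵀ := by
    rw [← key s]; abel
  have hCP1 : C * P 1 = P t * (Φ 1 t)ᵀ := by
    rw [hC, mul_assoc, Matrix.nonsing_inv_mul _ ((Matrix.isUnit_iff_isUnit_det _).mp hP1),
      mul_one]
  have claim1 : P t * (Φ s t)ᵀ - C * Φ 1 s * P s = C * Φ 1 s * (Phat s)ᵀ := by
    rw [hPs, mul_sub]
    have e2 : C * Φ 1 s * (Φ s 1 * P 1 * (Φ s 1)ᵀ) = P t * (Φ s t)ᵀ := by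
      have h4 : Φ 1 s * (Φ s 1 * P 1 * (Φ s 1)ᵀ) = P 1 * (Φ s 1)ᵀ := by
        rw [← mul_assoc, ← mul_assoc, hΦmul1, one_mul]
      rw [mul_assoc, h4, ← mul_assoc, hCP1, mul_assoc, ← Matrix.transpose_mul, hΦco]
    rw [e2]
    abel
  -- final algebraic identity for the derivative value
  have hPhT : (Phat s)ᵀ * ((Phat s)⁻¹)ᵀ = 1 := by
    rw [Matrix.transpose_nonsing_inv,
      Matrix.mul_nonsing_inv _ (by
        rw [Matrix.det_transpose]
        exact (Matrix.isUnit_iff_isUnit_det _).mp hPhs)]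
  have halg : P t * (A s * Φ s t)ᵀ - ((C * -(Φ 1 s * A s)) * P s
        + C * Φ 1 s * (A s * P s + P s * (A s)ᵀ + B s * (B s)ᵀ))
      = (P t * (Φ s t)ᵀ - C * Φ 1 s * P s)
          * (A s - B s * (B s)ᵀ * (Phat s)⁻¹)ᵀ := by
    have lhs_eq : P t * (A s * Φ s t)ᵀ - ((C * -(Φ 1 s * A s)) * P s
          + C * Φ 1 s * (A s * P s + P s * (A s)ᵀ + B s * (B s)ᵀ))
        = (P t * (Φ s t)ᵀ - C * Φ 1 s * P s) * (A s)ᵀ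
            - C * Φ 1 s * (B s * (B s)ᵀ) := by
      simp only [Matrix.transpose_mul]
      noncomm_ring
    have rhs_eq : (P t * (Φ s t)ᵀ - C * Φ 1 s * P s)
          * (A s - B s * (B s)ᵀ * (Phat s)⁻¹)ᵀ
        = (P t * (Φ s t)ᵀ - C * Φ 1 s * P s) * (A s)ᵀ
            - C * Φ 1 s * (B s * (B s)ᵀ) := by
      have e3 : (P t * (Φ s t)ᵀ - C * Φ 1 s * P s) * ((Phat s)⁻¹)ᵀ = C * Φ 1 s := by
        rw [claim1, mul_assoc, hPhT, mul_one]
      simp only [Matrix.transpose_sub, Matrix.transpose_mul, Matrix.transpose_transpose,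
        mul_sub, ← mul_assoc]
      rw [e3]
    rw [lhs_eq, rhs_eq]
  have := entry_hasDerivAt hQ i j
  rw [halg] at this
  exact this
end

section
/- Let n be finite. Let A, B : ℝ → Matrix (Fin n) (Fin n) ℝ be continuous, Φ the state transition matrix of dξ/dt = A(t)ξ (with ∂Φ(t,s)/∂t = A(t)Φ(t,s), Φ(t,t) = I, Φ(s,t)Φ(t,r) = Φ(s,r), Φ(s,t)⁻¹ = Φ(t,s)), and let P, P̂ be differentiable solutions of dP/dt = AP + PAᵀ + BBᵀ with P(0) = 0 and dP̂/dt = AP̂ + P̂Aᵀ − BBᵀ with P̂(1) = 0; assume P̂(t) invertible for t ∈ [0,1) and P(1) invertible. Fix vectors ξ₀, ξ₁ ∈ ℝⁿ and define L(t) = Φ(t,0)ξ₀ + P(t)Φ(1,t)ᵀ P(1)⁻¹ (ξ₁ − Φ(1,0)ξ₀). Then L satisfies dL/dt = Â(t)L(t) + B(t)B(t)ᵀ P̂(t)⁻¹ Φ(t,1)ξ₁ for t ∈ [0,1), where Â(t) = A(t) − B(t)B(t)ᵀ P̂(t)⁻¹, with boundary values L(0) = ξ₀ and L(1) = ξ₁.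 -/
open Matrix

attribute [local instance] Matrix.linftyOpNormedRing Matrix.linftyOpNormedAlgebra

section Aux

variable {n : ℕ}

/-- entrywise derivatives give a matrix-valued derivative -/
theorem hasDerivAt_matrix {f : ℝ → Matrix (Fin n) (Fin n) ℝ}
    {f' : Matrix (Fin n) (Fin n) ℝ} {t : ℝ}
    (h : ∀ i j, HasDerivAt (fun t => f t i j) (f' i j) t) :
    HasDerivAt f f' t := by
  have hf : f = fun s => ∑ i, ∑ j, Matrix.single i j (f s i j) := by
    funext s; exact matrix_eq_sum_single (f s)
  have hf' : f' = ∑ i : Fin n, ∑ j : Fin n, Matrix.single i j (f' i j) :=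
    matrix_eq_sum_single f'
  rw [hf, hf']
  refine HasDerivAt.fun_sum fun i _ => HasDerivAt.fun_sum fun j _ => ?_
  have : ∀ c : ℝ, Matrix.single i j c = c • Matrix.single i j (1 : ℝ) := by
    intro c; rw [smul_single, smul_eq_mul, mul_one]
  rw [this (f' i j), show (fun s => Matrix.single i j (f s i j))
      = fun s => (f s i j) • Matrix.single i j (1:ℝ) from funext fun s => this _]
  exact (h i j).smul_const _

noncomputable def entryCLM (i j : Fin n) : Matrix (Fin n) (Fin n) ℝ →L[ℝ] ℝ :=
  LinearMap.toContinuousLinearMap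
    { toFun := fun M => M i j
      map_add' := fun _ _ => rfl
      map_smul' := fun _ _ => rfl }

theorem hasDerivAt_entry {f : ℝ → Matrix (Fin n) (Fin n) ℝ}
    {f' : Matrix (Fin n) (Fin n) ℝ} {t : ℝ}
    (h : HasDerivAt f f' t) (i j : Fin n) :
    HasDerivAt (fun t => f t i j) (f' i j) t :=
  (entryCLM i j).hasFDerivAt.comp_hasDerivAt t h

noncomputable def mulVecCLM (v : Fin n → ℝ) (i : Fin n) :
    Matrix (Fin n) (Fin n) ℝ →L[ℝ] ℝ :=
  LinearMap.toContinuousLinearMap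
    { toFun := fun M => M.mulVec v i
      map_add' := fun M N => by simp [Matrix.add_mulVec]
      map_smul' := fun c M => by simp [Matrix.smul_mulVec] }

theorem hasDerivAt_mulVec {f : ℝ → Matrix (Fin n) (Fin n) ℝ}
    {f' : Matrix (Fin n) (Fin n) ℝ} {t : ℝ}
    (h : HasDerivAt f f' t) (v : Fin n → ℝ) (i : Fin n) :
    HasDerivAt (fun t => (f t).mulVec v i) (f'.mulVec v i) t :=
  (mulVecCLM v i).hasFDerivAt.comp_hasDerivAt t h

end Aux
set_option maxHeartbeats 1600000 in
/-- First-moment identity of Proposition 2: the conditional mean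
`L(t) = Φ(t,0)ξ₀ + P(t)Φ(1,t)ᵀ P(1)⁻¹ (ξ₁ − Φ(1,0)ξ₀)` of the bridge with arbitrary
boundary points satisfies `L̇ = Â(t)L + B(t)B(t)ᵀP̂(t)⁻¹Φ(t,1)ξ₁` on `[0,1)`,
where `Â = A − BBᵀP̂⁻¹`, with `L(0) = ξ₀` and `L(1) = ξ₁`. -/
theorem stmt_17 (n : ℕ) (A B : ℝ → Matrix (Fin n) (Fin n) ℝ)
    (Φ : ℝ → ℝ → Matrix (Fin n) (Fin n) ℝ)
    (P Phat : ℝ → Matrix (Fin n) (Fin n) ℝ)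
    (hA : Continuous A) (hB : Continuous B)
    (hΦd : ∀ s : ℝ, ∀ t : ℝ, ∀ i j : Fin n,
      HasDerivAt (fun t => Φ t s i j) ((A t * Φ t s) i j) t)
    (hΦid : ∀ t : ℝ, Φ t t = 1)
    (hΦco : ∀ s t r : ℝ, Φ s t * Φ t r = Φ s r)
    (hΦinv : ∀ s t : ℝ, (Φ s t)⁻¹ = Φ t s)
    (hP : ∀ t : ℝ, ∀ i j : Fin n,
      HasDerivAt (fun t => P t i j)
        ((A t * P t + P t * (A t)ᵀ + B t * (B t)ᵀ) i j) t)
    (hP0 : P 0 = 0)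
    (hPhat : ∀ t : ℝ, ∀ i j : Fin n,
      HasDerivAt (fun t => Phat t i j)
        ((A t * Phat t + Phat t * (A t)ᵀ - B t * (B t)ᵀ) i j) t)
    (hPhat1 : Phat 1 = 0)
    (hPhatu : ∀ t ∈ Set.Ico (0 : ℝ) 1, IsUnit (Phat t))
    (hP1 : IsUnit (P 1))
    (ξ₀ ξ₁ : Fin n → ℝ) :
    (∀ t ∈ Set.Ico (0 : ℝ) 1, ∀ i : Fin n,
      HasDerivAt
        (fun t => ((Φ t 0).mulVec ξ₀
          + (P t * (Φ 1 t)ᵀ * (P 1)⁻¹).mulVec (ξ₁ - (Φ 1 0).mulVec ξ₀)) i)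
        (((A t - B t * (B t)ᵀ * (Phat t)⁻¹).mulVec
            ((Φ t 0).mulVec ξ₀
              + (P t * (Φ 1 t)ᵀ * (P 1)⁻¹).mulVec (ξ₁ - (Φ 1 0).mulVec ξ₀))
          + (B t * (B t)ᵀ * (Phat t)⁻¹ * Φ t 1).mulVec ξ₁) i) t) ∧
    (Φ 0 0).mulVec ξ₀
      + (P 0 * (Φ 1 0)ᵀ * (P 1)⁻¹).mulVec (ξ₁ - (Φ 1 0).mulVec ξ₀) = ξ₀ ∧
    (Φ 1 0).mulVec ξ₀
      + (P 1 * (Φ 1 1)ᵀ * (P 1)⁻¹).mulVec (ξ₁ - (Φ 1 0).mulVec ξ₀) = ξ₁ := by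
  classical
  have hP1det : IsUnit (P 1).det := (Matrix.isUnit_iff_isUnit_det _).mp hP1
  set η := ξ₁ - (Φ 1 0).mulVec ξ₀ with hη
  have hFG : ∀ t : ℝ, Φ t 1 * Φ 1 t = 1 := fun t => by rw [hΦco, hΦid]
  have hGF : ∀ t : ℝ, Φ 1 t * Φ t 1 = 1 := fun t => by rw [hΦco, hΦid]
  have hMd : ∀ t : ℝ, HasDerivAt (fun t => Φ t 0) (A t * Φ t 0) t :=
    fun t => hasDerivAt_matrix (fun i j => hΦd 0 t i j)
  have hFd : ∀ t : ℝ, HasDerivAt (fun t => Φ t 1) (A t * Φ t 1) t :=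
    fun t => hasDerivAt_matrix (fun i j => hΦd 1 t i j)
  have hPd : ∀ t, HasDerivAt P (A t * P t + P t * (A t)ᵀ + B t * (B t)ᵀ) t :=
    fun t => hasDerivAt_matrix (fun i j => hP t i j)
  have hPh : ∀ t, HasDerivAt Phat (A t * Phat t + Phat t * (A t)ᵀ - B t * (B t)ᵀ) t :=
    fun t => hasDerivAt_matrix (fun i j => hPhat t i j)
  have hGd : ∀ t : ℝ, HasDerivAt (fun t => Φ 1 t) (-(Φ 1 t * A t)) t := by
    intro t
    have hcomp := (hasFDerivAt_ringInverse (𝕜 := ℝ)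
        (⟨Φ t 1, Φ 1 t, hFG t, hGF t⟩ : (Matrix (Fin n) (Fin n) ℝ)ˣ)).comp_hasDerivAt
      t (hFd t)
    have heq : (fun s => Ring.inverse (Φ s 1)) = fun s => Φ 1 s := by
      funext s
      rw [← Matrix.nonsing_inv_eq_ringInverse, hΦinv]
    simp only [Function.comp_def] at hcomp
    rw [heq] at hcomp
    refine hcomp.congr_deriv (Eq.symm ?_)
    show -(Φ 1 t * A t)
        = (-(ContinuousLinearMap.mulLeftRight ℝ _ (Φ 1 t) (Φ 1 t))) (A t * Φ t 1)
    simp only [ContinuousLinearMap.neg_apply, ContinuousLinearMap.mulLeftRight_apply]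
    rw [mul_assoc, mul_assoc, hFG, mul_one]
  have hGTd : ∀ t, HasDerivAt (fun t => (Φ 1 t)ᵀ) (-((A t)ᵀ * (Φ 1 t)ᵀ)) t := by
    intro t
    have h2 := hasDerivAt_matrix (f := fun t => (Φ 1 t)ᵀ) (f' := (-(Φ 1 t * A t))ᵀ)
      (fun i j => hasDerivAt_entry (hGd t) j i)
    rwa [Matrix.transpose_neg, Matrix.transpose_mul] at h2
  -- the key Lyapunov identity
  have hkey : ∀ t : ℝ, Phat t + P t = Φ t 1 * P 1 * (Φ t 1)ᵀ := by
    have hEd : ∀ t : ℝ, HasDerivAt (fun t => Φ 1 t * (Phat t + P t) * (Φ 1 t)ᵀ) 0 t := by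
      intro t
      have hH : HasDerivAt (fun t => Phat t + P t)
          (A t * (Phat t + P t) + (Phat t + P t) * (A t)ᵀ) t := by
        have := (hPh t).add (hPd t)
        refine this.congr_deriv ?_
        noncomm_ring
      have h3 := ((hGd t).mul hH).mul (hGTd t)
      refine h3.congr_deriv ?_
      simp only [Pi.mul_apply]
      noncomm_ring
    have hconst : ∀ t : ℝ, Φ 1 t * (Phat t + P t) * (Φ 1 t)ᵀ
        = Φ 1 1 * (Phat 1 + P 1) * (Φ 1 1)ᵀ := by
      intro t
      refine is_const_of_fderiv_eq_zero (fun s => (hEd s).differentiableAt) (fun s => ?_) t 1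
      refine (hEd s).hasFDerivAt.fderiv.trans ?_
      ext v
      simp
      rfl
    intro t
    have h1 := hconst t
    rw [hΦid, hPhat1, zero_add, Matrix.transpose_one, one_mul, mul_one] at h1
    calc Phat t + P t
        = (Φ t 1 * Φ 1 t) * (Phat t + P t) * ((Φ 1 t)ᵀ * (Φ t 1)ᵀ) := by
          rw [hFG, ← Matrix.transpose_mul, hFG, Matrix.transpose_one, one_mul, mul_one]
      _ = Φ t 1 * (Φ 1 t * (Phat t + P t) * (Φ 1 t)ᵀ) * (Φ t 1)ᵀ := by noncomm_ring
      _ = Φ t 1 * P 1 * (Φ t 1)ᵀ := by rw [h1]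
  refine ⟨fun t ht i => ?_, ?_, ?_⟩
  · -- derivative statement
    have hPhdet : IsUnit (Phat t).det := (Matrix.isUnit_iff_isUnit_det _).mp (hPhatu t ht)
    have hNd : HasDerivAt (fun t => P t * (Φ 1 t)ᵀ * (P 1)⁻¹)
        (A t * (P t * (Φ 1 t)ᵀ * (P 1)⁻¹)
          + B t * (B t)ᵀ * ((Φ 1 t)ᵀ * (P 1)⁻¹)) t := by
      have h4 := ((hPd t).mul (hGTd t)).mul_const ((P 1)⁻¹)
      refine h4.congr_deriv ?_
      noncomm_ring
    have hGP : (Φ 1 t)ᵀ * (P 1)⁻¹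
        = (Phat t)⁻¹ * (Φ t 1 - P t * (Φ 1 t)ᵀ * (P 1)⁻¹) := by
      have hstep : Phat t * ((Φ 1 t)ᵀ * (P 1)⁻¹)
          = Φ t 1 - P t * (Φ 1 t)ᵀ * (P 1)⁻¹ := by
        have hPhval : Phat t = Φ t 1 * P 1 * (Φ t 1)ᵀ - P t := by
          rw [← hkey t]; abel
        rw [hPhval, Matrix.sub_mul]
        congr 1
        · rw [show Φ t 1 * P 1 * (Φ t 1)ᵀ * ((Φ 1 t)ᵀ * (P 1)⁻¹)
              = Φ t 1 * P 1 * ((Φ t 1)ᵀ * (Φ 1 t)ᵀ) * (P 1)⁻¹ by noncomm_ring,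
            ← Matrix.transpose_mul, hGF, Matrix.transpose_one, mul_one,
            mul_assoc, Matrix.mul_nonsing_inv _ hP1det, mul_one]
        · rw [mul_assoc]
      rw [← hstep, ← mul_assoc, Matrix.nonsing_inv_mul _ hPhdet, one_mul]
    have hLd := (hasDerivAt_mulVec (hMd t) ξ₀ i).add (hasDerivAt_mulVec hNd η i)
    have hξ₁ : ξ₁ = η + Φ 1 0 *ᵥ ξ₀ := by rw [hη]; abel
    have hM10 : Φ t 1 * Φ 1 0 = Φ t 0 := hΦco t 1 0
    rw [hξ₁]
    have hc0 : (A t - B t * (B t)ᵀ * (Phat t)⁻¹) * Φ t 0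
          + B t * (B t)ᵀ * (Phat t)⁻¹ * Φ t 1 * Φ 1 0 = A t * Φ t 0 := by
      rw [mul_assoc (B t * (B t)ᵀ * (Phat t)⁻¹) (Φ t 1) (Φ 1 0), hM10, Matrix.sub_mul]
      abel
    have hc1 : (A t - B t * (B t)ᵀ * (Phat t)⁻¹) * (P t * (Φ 1 t)ᵀ * (P 1)⁻¹)
          + B t * (B t)ᵀ * (Phat t)⁻¹ * Φ t 1
        = A t * (P t * (Φ 1 t)ᵀ * (P 1)⁻¹)
          + B t * (B t)ᵀ * ((Φ 1 t)ᵀ * (P 1)⁻¹) := by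
      rw [hGP, ← mul_assoc (B t * (B t)ᵀ) ((Phat t)⁻¹)
          (Φ t 1 - P t * (Φ 1 t)ᵀ * (P 1)⁻¹),
        Matrix.mul_sub, Matrix.sub_mul]
      abel
    have veq : (A t - B t * (B t)ᵀ * (Phat t)⁻¹) *ᵥ
            (Φ t 0 *ᵥ ξ₀ + (P t * (Φ 1 t)ᵀ * (P 1)⁻¹) *ᵥ η)
          + (B t * (B t)ᵀ * (Phat t)⁻¹ * Φ t 1) *ᵥ (η + Φ 1 0 *ᵥ ξ₀)
        = (A t * Φ t 0) *ᵥ ξ₀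
          + (A t * (P t * (Φ 1 t)ᵀ * (P 1)⁻¹)
              + B t * (B t)ᵀ * ((Φ 1 t)ᵀ * (P 1)⁻¹)) *ᵥ η := by
      calc (A t - B t * (B t)ᵀ * (Phat t)⁻¹) *ᵥ
              (Φ t 0 *ᵥ ξ₀ + (P t * (Φ 1 t)ᵀ * (P 1)⁻¹) *ᵥ η)
            + (B t * (B t)ᵀ * (Phat t)⁻¹ * Φ t 1) *ᵥ (η + Φ 1 0 *ᵥ ξ₀)
          = ((A t - B t * (B t)ᵀ * (Phat t)⁻¹) * Φ t 0
                + B t * (B t)ᵀ * (Phat t)⁻¹ * Φ t 1 * Φ 1 0) *ᵥ ξ₀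
              + ((A t - B t * (B t)ᵀ * (Phat t)⁻¹) * (P t * (Φ 1 t)ᵀ * (P 1)⁻¹)
                + B t * (B t)ᵀ * (Phat t)⁻¹ * Φ t 1) *ᵥ η := by
            simp only [Matrix.mulVec_add, Matrix.mulVec_mulVec, Matrix.add_mulVec]
            abel
        _ = (A t * Φ t 0) *ᵥ ξ₀
              + (A t * (P t * (Φ 1 t)ᵀ * (P 1)⁻¹)
                  + B t * (B t)ᵀ * ((Φ 1 t)ᵀ * (P 1)⁻¹)) *ᵥ η := by
            rw [hc0, hc1]
    rw [veq]
    exact hLd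
  · rw [hΦid 0, hP0]
    simp
  · rw [hΦid 1, Matrix.transpose_one, mul_one, Matrix.mul_nonsing_inv _ hP1det,
      Matrix.one_mulVec]
    rw [hη]
    abel
end
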